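/- For every prime p with p ≥ 13 and p ≡ 1 (mod 4), there exists a weight w on the additive cyclic group ZMod p such that no weight on ZMod p that is 𝒫-equivalent to w is gapless (that is, ℤ_p has at least one invariant metric that is not 𝒫-interval). -/
import Mathlib


/-- A weight on a group `G`: vanishes exactly at the identity, is symmetric
under inversion, and satisfies the triangle inequality. -/
def IsWeight {G : Type*} [Group G] (w : G → ℕ) : Prop :=
  (∀ x, w x = 0 ↔ x = 1) ∧ (∀ x, w x⁻¹ = w x) ∧ ∀ x y, w (x * y) ≤ w x + w y

/-- A weight is gapless if its set of values is an initial segment of `ℕ`. -/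
def Gapless {G : Type*} (w : G → ℕ) : Prop :=
  ∀ g : G, ∀ m : ℕ, m ≤ w g → ∃ h : G, w h = m

/-- Two weights are `𝒫`-equivalent if they induce the same partition of `G`
into level sets. -/
def PEquivW {G : Type*} (w w' : G → ℕ) : Prop :=
  ∀ g h : G, w g = w h ↔ w' g = w' h

/-- A weight on an additive group `G`. -/
def IsAddWeight {G : Type*} [AddGroup G] (w : G → ℕ) : Prop :=
  (∀ x, w x = 0 ↔ x = 0) ∧ (∀ x, w (-x) = w x) ∧ ∀ x y, w (x + y) ≤ w x + w y

/-- The "class" of an element of `ZMod p`: its distance to `0`. -/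
def cls (p : ℕ) (x : ZMod p) : ℕ := min x.val (p - x.val)

/-- A weight on `ZMod p` taking values in `{0,2,3,4}`: value `2` on classes
`{1,2}`, value `3` on classes `{3, p/2}`, value `4` elsewhere. -/
def w0 (p : ℕ) (x : ZMod p) : ℕ :=
  if cls p x = 0 then 0
  else if cls p x ≤ 2 then 2
  else if cls p x = 3 ∨ cls p x = p / 2 then 3
  else 4

section basic
variable {p : ℕ} [NeZero p]

theorem cls_eq_zero_iff (x : ZMod p) : cls p x = 0 ↔ x = 0 := by
  have h := ZMod.val_lt x
  rw [cls, ← ZMod.val_eq_zero]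
  omega

theorem cls_neg (x : ZMod p) : cls p (-x) = cls p x := by
  by_cases hx : x = 0
  · simp [hx]
  · haveI : NeZero x := ⟨hx⟩
    have h := ZMod.val_lt x
    rw [cls, cls, ZMod.val_neg_of_ne_zero]
    omega

theorem cls_cast (k : ℕ) (hk : k ≤ p / 2) : cls p ((k : ZMod p)) = k := by
  have hkp : k < p := by
    have := NeZero.pos p
    omega
  rw [cls, ZMod.val_cast_of_lt hkp]
  omega

omit [NeZero p] in
theorem w0_le (x : ZMod p) : w0 p x ≤ 4 := by
  unfold w0; split_ifs <;> first | rfl | omega | simp_all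

theorem w0_eq_zero_iff (x : ZMod p) : w0 p x = 0 ↔ x = 0 := by
  rw [← cls_eq_zero_iff x]
  unfold w0; split_ifs with h1 h2 h3 <;> simp [h1]

theorem two_le_w0 {x : ZMod p} (hx : x ≠ 0) : 2 ≤ w0 p x := by
  have h0 : cls p x ≠ 0 := fun h => hx ((cls_eq_zero_iff x).mp h)
  unfold w0; split_ifs <;> first | rfl | omega | simp_all

theorem w0_neg (x : ZMod p) : w0 p (-x) = w0 p x := by
  unfold w0; rw [cls_neg]

theorem w0_eq_two {x : ZMod p} (h : cls p x = 1 ∨ cls p x = 2) : w0 p x = 2 := by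
  unfold w0; split_ifs <;> omega

theorem w0_eq_three {x : ZMod p} (h : cls p x = 3 ∨ cls p x = p / 2)
    (hge : 3 ≤ cls p x) : w0 p x = 3 := by
  unfold w0; split_ifs <;> omega

theorem w0_eq_four {x : ZMod p} (h0 : cls p x ≠ 0) (h2 : ¬ cls p x ≤ 2)
    (h3 : cls p x ≠ 3) (hh : cls p x ≠ p / 2) : w0 p x = 4 := by
  unfold w0; split_ifs <;> omega

theorem w0_isAddWeight : IsAddWeight (w0 p) := by
  refine ⟨w0_eq_zero_iff, w0_neg, ?_⟩
  intro x y
  by_cases hx : x = 0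
  · simp [hx]
  by_cases hy : y = 0
  · simp [hy]
  have h1 := two_le_w0 hx
  have h2 := two_le_w0 hy
  have h3 := w0_le (p := p) (x + y)
  omega

end basic


/-- For every prime `p ≥ 13` with `p ≡ 1 (mod 4)`, the cyclic group `ℤ/p` has
a weight no `𝒫`-equivalent weight of which is gapless; i.e. `ℤ_p` has an
invariant metric that is not `𝒫`-interval. -/
theorem zmod_p_has_non_interval_weight (p : ℕ) (hp : p.Prime) (h13 : 13 ≤ p)
    (hmod : p % 4 = 1) :
    ∃ w : ZMod p → ℕ, IsAddWeight w ∧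
      ∀ w' : ZMod p → ℕ, IsAddWeight w' → PEquivW w w' → ¬ Gapless w' := by
  haveI : NeZero p := ⟨by omega⟩
  obtain ⟨n, hn⟩ : ∃ n, n = p / 2 := ⟨p / 2, rfl⟩
  have hp2 : p % 2 = 1 := by omega
  have hpn : p = 2 * n + 1 := by omega
  have hn6 : 6 ≤ n := by omega
  refine ⟨w0 p, w0_isAddWeight, ?_⟩
  intro w' hw' hP hG
  obtain ⟨hz', hneg', htri'⟩ := hw'
  have hw'0 : w' 0 = 0 := (hz' 0).mpr rfl
  -- class computations
  have c1 : cls p ((1 : ℕ) : ZMod p) = 1 := cls_cast 1 (by omega)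
  have c2 : cls p ((2 : ℕ) : ZMod p) = 2 := cls_cast 2 (by omega)
  have c3 : cls p ((3 : ℕ) : ZMod p) = 3 := cls_cast 3 (by omega)
  have c4 : cls p ((4 : ℕ) : ZMod p) = 4 := cls_cast 4 (by omega)
  have cn : cls p ((n : ℕ) : ZMod p) = n := cls_cast n (by omega)
  have cn1 : cls p ((n - 1 : ℕ) : ZMod p) = n - 1 := cls_cast (n - 1) (by omega)
  have cn2 : cls p ((n - 2 : ℕ) : ZMod p) = n - 2 := cls_cast (n - 2) (by omega)
  have c2n : cls p ((2 * n : ℕ) : ZMod p) = 1 := by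
    rw [cls, ZMod.val_cast_of_lt (by omega)]; omega
  have cn3 : cls p ((n + 3 : ℕ) : ZMod p) = n - 2 := by
    rw [cls, ZMod.val_cast_of_lt (by omega)]; omega
  have c2n2 : cls p ((2 * n - 2 : ℕ) : ZMod p) = 3 := by
    rw [cls, ZMod.val_cast_of_lt (by omega)]; omega
  -- w0 values
  have hn' : p / 2 = n := hn.symm
  have w1 : w0 p ((1 : ℕ) : ZMod p) = 2 := by exact w0_eq_two (Or.inl c1)
  have w2 : w0 p ((2 : ℕ) : ZMod p) = 2 := by exact w0_eq_two (Or.inr c2)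
  have w3 : w0 p ((3 : ℕ) : ZMod p) = 3 := by exact w0_eq_three (Or.inl c3) (by omega)
  have w4 : w0 p ((4 : ℕ) : ZMod p) = 4 := by exact w0_eq_four (by omega) (by omega) (by omega) (by omega)
  have wn : w0 p ((n : ℕ) : ZMod p) = 3 := by exact w0_eq_three (Or.inr (by omega)) (by omega)
  have wn1 : w0 p ((n - 1 : ℕ) : ZMod p) = 4 := by exact w0_eq_four (by omega) (by omega) (by omega) (by omega)
  have wn2 : w0 p ((n - 2 : ℕ) : ZMod p) = 4 := by exact w0_eq_four (by omega) (by omega) (by omega) (by omega)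
  have w2n : w0 p ((2 * n : ℕ) : ZMod p) = 2 := by exact w0_eq_two (Or.inl c2n)
  have wn3 : w0 p ((n + 3 : ℕ) : ZMod p) = 4 := by exact w0_eq_four (by omega) (by omega) (by omega) (by omega)
  have w2n2 : w0 p ((2 * n - 2 : ℕ) : ZMod p) = 3 := by exact w0_eq_three (Or.inl c2n2) (by omega)
  -- transfer along the partition equivalence
  have key : ∀ x y : ZMod p, w0 p x = w0 p y → w' x = w' y := fun x y h => (hP x y).mp h
  have k1 : w' ((2 : ℕ) : ZMod p) = w' ((1 : ℕ) : ZMod p) := key _ _ (by rw [w2, w1])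
  have k2 : w' ((n : ℕ) : ZMod p) = w' ((3 : ℕ) : ZMod p) := key _ _ (by rw [wn, w3])
  have k3 : w' ((2 * n : ℕ) : ZMod p) = w' ((1 : ℕ) : ZMod p) := key _ _ (by rw [w2n, w1])
  have k4 : w' ((n + 3 : ℕ) : ZMod p) = w' ((4 : ℕ) : ZMod p) := key _ _ (by rw [wn3, w4])
  have k5 : w' ((n - 1 : ℕ) : ZMod p) = w' ((4 : ℕ) : ZMod p) := key _ _ (by rw [wn1, w4])
  have k6 : w' (-((n - 2 : ℕ) : ZMod p)) = w' ((4 : ℕ) : ZMod p) :=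
    key _ _ (by rw [w0_neg, wn2, w4])
  have k7 : w' ((2 * n - 2 : ℕ) : ZMod p) = w' ((3 : ℕ) : ZMod p) := key _ _ (by rw [w2n2, w3])
  -- triangle inequality instances
  have s12 : ((1 : ℕ) : ZMod p) + ((2 : ℕ) : ZMod p) = ((3 : ℕ) : ZMod p) := by push_cast; ring
  have s22 : ((2 : ℕ) : ZMod p) + ((2 : ℕ) : ZMod p) = ((4 : ℕ) : ZMod p) := by push_cast; ring
  have snn : ((n : ℕ) : ZMod p) + ((n : ℕ) : ZMod p) = ((2 * n : ℕ) : ZMod p) := by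
    push_cast; ring
  have sn3 : ((n : ℕ) : ZMod p) + ((3 : ℕ) : ZMod p) = ((n + 3 : ℕ) : ZMod p) := by
    push_cast; ring
  have sc : ((n - 1 : ℕ) : ZMod p) + -((n - 2 : ℕ) : ZMod p) = ((1 : ℕ) : ZMod p) := by
    have h : n - 1 = (n - 2) + 1 := by omega
    rw [h]; push_cast; ring
  have snn2 : ((n - 1 : ℕ) : ZMod p) + ((n - 1 : ℕ) : ZMod p) = ((2 * n - 2 : ℕ) : ZMod p) := by
    have h : 2 * n - 2 = (n - 1) + (n - 1) := by omega
    rw [h]; push_cast; ring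
  have t1 : w' ((3 : ℕ) : ZMod p) ≤ w' ((1 : ℕ) : ZMod p) + w' ((2 : ℕ) : ZMod p) := by
    have := htri' ((1 : ℕ) : ZMod p) ((2 : ℕ) : ZMod p); rwa [s12] at this
  have t2 : w' ((4 : ℕ) : ZMod p) ≤ w' ((2 : ℕ) : ZMod p) + w' ((2 : ℕ) : ZMod p) := by
    have := htri' ((2 : ℕ) : ZMod p) ((2 : ℕ) : ZMod p); rwa [s22] at this
  have t3 : w' ((2 * n : ℕ) : ZMod p) ≤ w' ((n : ℕ) : ZMod p) + w' ((n : ℕ) : ZMod p) := by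
    have := htri' ((n : ℕ) : ZMod p) ((n : ℕ) : ZMod p); rwa [snn] at this
  have t4 : w' ((n + 3 : ℕ) : ZMod p) ≤ w' ((n : ℕ) : ZMod p) + w' ((3 : ℕ) : ZMod p) := by
    have := htri' ((n : ℕ) : ZMod p) ((3 : ℕ) : ZMod p); rwa [sn3] at this
  have t5 : w' ((1 : ℕ) : ZMod p) ≤
      w' ((n - 1 : ℕ) : ZMod p) + w' (-((n - 2 : ℕ) : ZMod p)) := by
    have := htri' ((n - 1 : ℕ) : ZMod p) (-((n - 2 : ℕ) : ZMod p)); rwa [sc] at this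
  have t6 : w' ((2 * n - 2 : ℕ) : ZMod p) ≤
      w' ((n - 1 : ℕ) : ZMod p) + w' ((n - 1 : ℕ) : ZMod p) := by
    have := htri' ((n - 1 : ℕ) : ZMod p) ((n - 1 : ℕ) : ZMod p); rwa [snn2] at this
  -- the three representatives are nonzero, hence w' is nonzero there
  have nz : ∀ k : ℕ, cls p ((k : ZMod p)) ≠ 0 → w' ((k : ZMod p)) ≠ 0 := by
    intro k hk h
    have hx : ((k : ℕ) : ZMod p) = 0 := (hz' _).mp h
    rw [hx] at hk
    simp [cls] at hk
  have nz1 : w' ((1 : ℕ) : ZMod p) ≠ 0 := nz 1 (by omega)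
  have nz3 : w' ((3 : ℕ) : ZMod p) ≠ 0 := nz 3 (by omega)
  have nz4 : w' ((4 : ℕ) : ZMod p) ≠ 0 := nz 4 (by omega)
  -- the three w'-values are pairwise distinct
  have d13 : w' ((1 : ℕ) : ZMod p) ≠ w' ((3 : ℕ) : ZMod p) := by
    intro h; have := (hP _ _).mpr h; rw [w1, w3] at this; omega
  have d14 : w' ((1 : ℕ) : ZMod p) ≠ w' ((4 : ℕ) : ZMod p) := by
    intro h; have := (hP _ _).mpr h; rw [w1, w4] at this; omega
  have d34 : w' ((3 : ℕ) : ZMod p) ≠ w' ((4 : ℕ) : ZMod p) := by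
    intro h; have := (hP _ _).mpr h; rw [w3, w4] at this; omega
  -- every w'-value is one of the four values at representatives
  have mem : ∀ h : ZMod p, w' h = 0 ∨ w' h = w' ((1 : ℕ) : ZMod p) ∨
      w' h = w' ((3 : ℕ) : ZMod p) ∨ w' h = w' ((4 : ℕ) : ZMod p) := by
    intro h
    have hv : w0 p h = 0 ∨ w0 p h = 2 ∨ w0 p h = 3 ∨ w0 p h = 4 := by
      unfold w0; split_ifs <;> first | rfl | omega | simp_all
    rcases hv with hv | hv | hv | hv
    · left
      have : h = 0 := (w0_eq_zero_iff h).mp hv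
      rw [this, hw'0]
    · exact Or.inr (Or.inl (key _ _ (by rw [hv, w1])))
    · exact Or.inr (Or.inr (Or.inl (key _ _ (by rw [hv, w3]))))
    · exact Or.inr (Or.inr (Or.inr (key _ _ (by rw [hv, w4]))))
  -- some representative has w'-value at least 3
  have hmax : 3 ≤ w' ((1 : ℕ) : ZMod p) ∨ 3 ≤ w' ((3 : ℕ) : ZMod p) ∨
      3 ≤ w' ((4 : ℕ) : ZMod p) := by omega
  -- gaplessness gives elements of value 1 and 3
  have hreal : ∀ m : ℕ, m ≤ 3 → ∃ h : ZMod p, w' h = m := by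
    intro m hm
    rcases hmax with h | h | h
    · exact hG _ m (le_trans hm h)
    · exact hG _ m (le_trans hm h)
    · exact hG _ m (le_trans hm h)
  have hval : ∀ m : ℕ, m ≤ 3 → m ≠ 0 → m = w' ((1 : ℕ) : ZMod p) ∨
      m = w' ((3 : ℕ) : ZMod p) ∨ m = w' ((4 : ℕ) : ZMod p) := by
    intro m hm hm0
    obtain ⟨h, hh⟩ := hreal m hm
    rcases mem h with h' | h' | h' | h' <;> rw [hh] at h'
    · exact absurd h' hm0
    · exact Or.inl h'
    · exact Or.inr (Or.inl h')
    · exact Or.inr (Or.inr h')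
  have H1 := hval 1 (by omega) (by omega)
  have H3 := hval 3 (by omega) (by omega)
  omega
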